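/- Let u(0)=1 and for n ≥ 1 let u(n) be the number of partitions of [n] into an unordered set of noncrossing lists. Then u satisfies the recurrence u(n) = sum over k from 1 to n of k! times the sum over all weak compositions (b_1,...,b_k) of n-k into k nonnegative parts of u(b_1)u(b_2)...u(b_k). -/

import Mathlib

/-- A partition of `[n]` into a set of noncrossing lists: an unordered collection of
nonempty duplicate-free lists, each element of `Fin n` in exactly one list, whose
underlying sets form a noncrossing set partition. -/
def SetOfNCLists (n : ℕ) : Type :=
  {S : Finset (List (Fin n)) // (∀ l ∈ S, l ≠ [] ∧ l.Nodup) ∧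
    (∀ x : Fin n, ∃! l, l ∈ S ∧ x ∈ l) ∧
    ¬ ∃ a b c d : Fin n, a < b ∧ b < c ∧ c < d ∧
      ∃ l₁ ∈ S, ∃ l₂ ∈ S, l₁ ≠ l₂ ∧ a ∈ l₁ ∧ c ∈ l₁ ∧ b ∈ l₂ ∧ d ∈ l₂}

/-- `u n` is the number of partitions of `[n]` into sets of noncrossing lists
(`u 0 = 1`, witnessed by the empty collection). -/
noncomputable def u (n : ℕ) : ℕ := Nat.card (SetOfNCLists n)


open Finset

namespace NCL

/-- Noncrossing condition for a finite set of lists over ℕ. -/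
def NC (S : Finset (List ℕ)) : Prop :=
  ∀ a b c d : ℕ, a < b → b < c → c < d →
    ∀ l₁ ∈ S, ∀ l₂ ∈ S, l₁ ≠ l₂ → a ∈ l₁ → c ∈ l₁ → b ∈ l₂ → d ∈ l₂ → False

/-- `S` is a noncrossing list partition of the finset `A`. -/
def Good (A : Finset ℕ) (S : Finset (List ℕ)) : Prop :=
  (∀ l ∈ S, l ≠ [] ∧ l.Nodup ∧ ∀ x ∈ l, x ∈ A) ∧
  (∀ x ∈ A, ∃! l, l ∈ S ∧ x ∈ l) ∧ NC S

def PP (A : Finset ℕ) : Type := {S : Finset (List ℕ) // Good A S}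

lemma Good.disj {A S} (h : Good A S) {l₁ l₂ : List ℕ} (h₁ : l₁ ∈ S) (h₂ : l₂ ∈ S)
    (hne : l₁ ≠ l₂) {x : ℕ} (hx₁ : x ∈ l₁) (hx₂ : x ∈ l₂) : False := by
  have hxA : x ∈ A := (h.1 l₁ h₁).2.2 x hx₁
  obtain ⟨l, -, hu⟩ := h.2.1 x hxA
  exact hne ((hu l₁ ⟨h₁, hx₁⟩).trans (hu l₂ ⟨h₂, hx₂⟩).symm)

section Arith
variable (k : ℕ) (b : Fin k → ℕ)

/-- Extension of `b` to ℕ by zero. -/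
def B (m : ℕ) : ℕ := if h : m < k then b ⟨m, h⟩ else 0

/-- Left endpoint of the `m`-th gap. -/
def Off (m : ℕ) : ℕ := m + ∑ j ∈ Finset.range m, B k b j

/-- The `m`-th element (in increasing order) of the distinguished block. -/
def pos (m : ℕ) : ℕ := Off k b m + B k b m

variable {k b}

lemma B_coe (i : Fin k) : B k b i = b i := by simp [B]

lemma Off_zero : Off k b 0 = 0 := by simp [Off]

lemma Off_succ (m : ℕ) : Off k b (m + 1) = pos k b m + 1 := by
  simp [Off, pos, Finset.sum_range_succ]; ring

lemma pos_lt_Off_succ (m : ℕ) : pos k b m < Off k b (m + 1) := by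
  rw [Off_succ]; omega

lemma Off_le_pos (m : ℕ) : Off k b m ≤ pos k b m := Nat.le_add_right _ _

lemma Off_mono : Monotone (Off k b) := by
  intro m m' h
  induction m' with
  | zero => have : m = 0 := by omega
            subst this; exact le_rfl
  | succ m' ih =>
    rcases Nat.lt_or_ge m (m'+1) with h' | h'
    · have h1 := Off_le_pos (k := k) (b := b) m'
      have h2 := pos_lt_Off_succ (k := k) (b := b) m'
      have h3 := ih (by omega)
      rw [Off_succ]; omega
    · have : m = m' + 1 := by omega
      subst this; exact le_rfl

lemma Off_strictMono : StrictMono (Off k b) := by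
  intro m m' h
  have h1 : pos k b m < Off k b (m+1) := pos_lt_Off_succ m
  have h2 : Off k b (m+1) ≤ Off k b m' := Off_mono h
  have := Off_le_pos (k := k) (b := b) m
  omega

lemma pos_lt_pos {m m' : ℕ} (h : m < m') : pos k b m < pos k b m' := by
  have h1 : pos k b m < Off k b (m+1) := pos_lt_Off_succ m
  have h2 : Off k b (m+1) ≤ Off k b m' := Off_mono h
  have := Off_le_pos (k := k) (b := b) m'
  omega

lemma Off_self : Off k b k = k + ∑ i, b i := by
  have : ∑ j ∈ Finset.range k, B k b j = ∑ i : Fin k, b i := by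
    rw [← Fin.sum_univ_eq_sum_range]
    exact Finset.sum_congr rfl fun i _ => B_coe i
  simp only [Off, this]

lemma Off_k {n : ℕ} (hkn : k ≤ n) (hb : ∑ i, b i = n - k) : Off k b k = n := by
  have : ∑ j ∈ Finset.range k, B k b j = ∑ i : Fin k, b i := by
    rw [← Fin.sum_univ_eq_sum_range]
    exact Finset.sum_congr rfl fun i _ => B_coe i
  simp only [Off, this, hb]; omega

lemma pos_last {n : ℕ} (hk1 : 1 ≤ k) (hkn : k ≤ n) (hb : ∑ i, b i = n - k) :
    pos k b (k - 1) = n - 1 := by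
  have h := Off_succ (k := k) (b := b) (k - 1)
  have hk : k - 1 + 1 = k := by omega
  rw [hk] at h
  rw [Off_k hkn hb] at h
  omega

lemma pos_lt_n {n m : ℕ} (hkn : k ≤ n) (hb : ∑ i, b i = n - k) (hm : m < k) :
    pos k b m < n := by
  have h1 : pos k b m < Off k b (m+1) := pos_lt_Off_succ m
  have h2 : Off k b (m+1) ≤ Off k b k := Off_mono hm
  rw [Off_k hkn hb] at h2; omega

/-- Generic: find the interval containing x. -/
lemma find_interval {f : ℕ → ℕ} {k x : ℕ} (h0 : f 0 ≤ x) (hk : x < f k) :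
    ∃ m < k, f m ≤ x ∧ x < f (m + 1) := by
  induction k with
  | zero => omega
  | succ k ih =>
    rcases Nat.lt_or_ge x (f k) with h | h
    · obtain ⟨m, hm, h1, h2⟩ := ih h
      exact ⟨m, by omega, h1, h2⟩
    · exact ⟨k, by omega, h, hk⟩

lemma cover {n x : ℕ} (hkn : k ≤ n) (hb : ∑ i, b i = n - k) (hx : x < n) :
    ∃ m < k, Off k b m ≤ x ∧ x ≤ pos k b m := by
  have h0 : Off k b 0 ≤ x := by rw [Off_zero]; omega
  have hk : x < Off k b k := by rw [Off_k hkn hb]; omega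
  obtain ⟨m, hm, h1, h2⟩ := find_interval h0 hk
  rw [Off_succ] at h2
  exact ⟨m, hm, h1, by omega⟩

/-- Intervals `[Off m, pos m]` are pairwise disjoint. -/
lemma interval_unique {x i j : ℕ} (hi1 : Off k b i ≤ x) (hi2 : x ≤ pos k b i)
    (hj1 : Off k b j ≤ x) (hj2 : x ≤ pos k b j) : i = j := by
  by_contra hne
  rcases Nat.lt_or_ge i j with h | h
  · have h1 : pos k b i < Off k b (i+1) := pos_lt_Off_succ i
    have h2 : Off k b (i+1) ≤ Off k b j := Off_mono h
    omega
  · have h' : j < i := by omega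
    have h1 : pos k b j < Off k b (j+1) := pos_lt_Off_succ j
    have h2 : Off k b (j+1) ≤ Off k b i := Off_mono h'
    omega

/-- A block element `pos j` never lies in the open gap `[Off i, pos i)`. -/
lemma pos_not_in_gap {i j : ℕ} (h1 : Off k b i ≤ pos k b j) (h2 : pos k b j < pos k b i) :
    False := by
  rcases Nat.lt_or_ge j i with h | h
  · have ha : pos k b j < Off k b (j+1) := pos_lt_Off_succ j
    have hc : Off k b (j+1) ≤ Off k b i := Off_mono h
    omega
  · rcases Nat.eq_or_lt_of_le h with h | h
    · subst h; omega
    · exact absurd (pos_lt_pos (k:=k) (b:=b) h) (by omega)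

end Arith

end NCL

namespace NCL

section Assemble
variable {n k : ℕ} (σ : Equiv.Perm (Fin k)) (b : Fin k → ℕ)
  (T : ∀ i : Fin k, PP (Finset.range (b i)))

/-- The distinguished list (the block of `n-1`), with order given by `σ`. -/
def Lb : List ℕ := List.ofFn fun j => pos k b (σ j : ℕ)

/-- The assembled noncrossing list partition. -/
def asmS : Finset (List ℕ) :=
  insert (Lb σ b)
    (Finset.univ.biUnion fun i : Fin k =>
      (T i).1.image (List.map (· + Off k b (i : ℕ))))

variable {σ b T}

lemma mem_asmS {l : List ℕ} :
    l ∈ asmS σ b T ↔ l = Lb σ b ∨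
      ∃ i : Fin k, ∃ m ∈ (T i).1, List.map (· + Off k b (i : ℕ)) m = l := by
  simp [asmS, Finset.mem_insert, Finset.mem_biUnion, Finset.mem_image]

lemma mem_Lb {x : ℕ} : x ∈ Lb σ b ↔ ∃ m : Fin k, pos k b (m : ℕ) = x := by
  rw [Lb, List.mem_ofFn]
  constructor
  · rintro ⟨j, rfl⟩; exact ⟨σ j, rfl⟩
  · rintro ⟨m, rfl⟩; exact ⟨σ.symm m, by simp⟩

lemma pos_inj {m m' : ℕ} (h : pos k b m = pos k b m') : m = m' := by
  rcases Nat.lt_trichotomy m m' with h' | h' | h'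
  · exact absurd (pos_lt_pos (k := k) (b := b) h') (by omega)
  · exact h'
  · exact absurd (pos_lt_pos (k := k) (b := b) h') (by omega)

lemma shifted_elem {i : Fin k} {m : List ℕ} (hm : m ∈ (T i).1) {x : ℕ}
    (hx : x ∈ m.map (· + Off k b (i : ℕ))) :
    Off k b (i : ℕ) ≤ x ∧ x < pos k b (i : ℕ) ∧ x - Off k b (i : ℕ) ∈ m := by
  rw [List.mem_map] at hx
  obtain ⟨y, hy, rfl⟩ := hx
  have hyr : y ∈ Finset.range (b i) := ((T i).2.1 m hm).2.2 y hy
  rw [Finset.mem_range] at hyr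
  have hpos : pos k b (i : ℕ) = Off k b (i : ℕ) + b i := by
    rw [pos, B_coe]
  refine ⟨by omega, by omega, ?_⟩
  simpa using hy

lemma Lb_nodup : (Lb σ b).Nodup := by
  rw [Lb, List.nodup_ofFn]
  intro j j' h
  exact σ.injective (Fin.ext (pos_inj h))

lemma mem_Lb_posn (m : Fin k) : pos k b (m : ℕ) ∈ Lb σ b := mem_Lb.2 ⟨m, rfl⟩

theorem asm_good (hk1 : 1 ≤ k) (hkn : k ≤ n) (hb : ∑ i, b i = n - k) :
    Good (Finset.range n) (asmS σ b T) := by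
  refine ⟨?_, ?_, ?_⟩
  · -- each list nonempty, nodup, contained in range n
    intro l hl
    rcases mem_asmS.1 hl with rfl | ⟨i, m, hm, rfl⟩
    · refine ⟨?_, Lb_nodup, ?_⟩
      · have : (Lb σ b).length = k := by simp [Lb]
        intro h; rw [h] at this; simp at this; omega
      · intro x hx
        obtain ⟨m, rfl⟩ := mem_Lb.1 hx
        rw [Finset.mem_range]
        exact pos_lt_n hkn hb m.isLt
    · obtain ⟨hne, hnd, hsub⟩ := (T i).2.1 m hm
      refine ⟨by simpa using hne, hnd.map (fun x y h => by omega), ?_⟩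
      intro x hx
      obtain ⟨h1, h2, h3⟩ := shifted_elem hm hx
      rw [Finset.mem_range]
      exact lt_trans h2 (pos_lt_n hkn hb i.isLt)
  · -- existence and uniqueness of covering list
    intro x hx
    rw [Finset.mem_range] at hx
    obtain ⟨m, hm, hm1, hm2⟩ := cover hkn hb hx
    by_cases hpx : x = pos k b m
    · refine ⟨Lb σ b, ⟨Finset.mem_insert_self _ _, hpx ▸ mem_Lb_posn ⟨m, hm⟩⟩, ?_⟩
      rintro l' ⟨hl', hxl'⟩
      rcases mem_asmS.1 hl' with rfl | ⟨i, m', hm', rfl⟩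
      · rfl
      · obtain ⟨h1, h2, h3⟩ := shifted_elem hm' hxl'
        exact (pos_not_in_gap (hpx ▸ h1) (hpx ▸ h2)).elim
    · -- x lies in the open gap m
      have hxlt : x < pos k b m := lt_of_le_of_ne hm2 hpx
      set i : Fin k := ⟨m, hm⟩ with hi
      have hico : (i : ℕ) = m := rfl
      have hyr : x - Off k b m ∈ Finset.range (b i) := by
        rw [Finset.mem_range]
        have : pos k b m = Off k b m + b i := by rw [pos, hico.symm, B_coe]
        omega
      obtain ⟨ml, ⟨hml, hyml⟩, hu⟩ := (T i).2.2.1 _ hyr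
      refine ⟨ml.map (· + Off k b m), ⟨mem_asmS.2 (Or.inr ⟨i, ml, hml, rfl⟩), ?_⟩, ?_⟩
      · rw [List.mem_map]
        exact ⟨x - Off k b m, hyml, by omega⟩
      · rintro l' ⟨hl', hxl'⟩
        rcases mem_asmS.1 hl' with rfl | ⟨i', m', hm', rfl⟩
        · obtain ⟨m', hm'⟩ := mem_Lb.1 hxl'
          exact (pos_not_in_gap (hm' ▸ hm1) (hm' ▸ hxlt)).elim
        · obtain ⟨h1, h2, h3⟩ := shifted_elem hm' hxl'
          have hii : (i' : ℕ) = m :=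
            interval_unique h1 (le_of_lt h2) hm1 (le_of_lt hxlt)
          have hieq : i' = i := Fin.ext hii
          subst hieq
          rw [hico] at h3
          have := hu m' ⟨hm', h3⟩
          rw [this, hico]
  · -- noncrossing
    intro p q r s hpq hqr hrs l₁ hl₁ l₂ hl₂ hne hp hr hq hs
    rcases mem_asmS.1 hl₁ with rfl | ⟨i₁, m₁, hm₁, rfl⟩ <;>
      rcases mem_asmS.1 hl₂ with h₂ | ⟨i₂, m₂, hm₂, rfl⟩
    · exact hne h₂.symm
    · -- l₁ = Lb, l₂ shifted from gap i₂
      obtain ⟨hq1, hq2, -⟩ := shifted_elem hm₂ hq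
      obtain ⟨hs1, hs2, -⟩ := shifted_elem hm₂ hs
      obtain ⟨mr, hmr⟩ := mem_Lb.1 hr
      refine pos_not_in_gap (k := k) (b := b) (i := (i₂:ℕ)) (j := (mr:ℕ)) ?_ ?_ <;> rw [hmr] <;> omega
    · -- l₁ shifted, l₂ = Lb
      subst h₂
      obtain ⟨hp1, hp2, -⟩ := shifted_elem hm₁ hp
      obtain ⟨hr1, hr2, -⟩ := shifted_elem hm₁ hr
      obtain ⟨mq, hmq⟩ := mem_Lb.1 hq
      refine pos_not_in_gap (k := k) (b := b) (i := (i₁:ℕ)) (j := (mq:ℕ)) ?_ ?_ <;> rw [hmq] <;> omega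
    · -- both shifted
      obtain ⟨hp1, hp2, hp3⟩ := shifted_elem hm₁ hp
      obtain ⟨hr1, hr2, hr3⟩ := shifted_elem hm₁ hr
      obtain ⟨hq1, hq2, hq3⟩ := shifted_elem hm₂ hq
      obtain ⟨hs1, hs2, hs3⟩ := shifted_elem hm₂ hs
      by_cases hii : i₁ = i₂
      · subst hii
        have hmm : m₁ ≠ m₂ := fun h => hne (by rw [h])
        exact (T i₁).2.2.2 (p - Off k b (i₁:ℕ)) (q - Off k b (i₁:ℕ))
          (r - Off k b (i₁:ℕ)) (s - Off k b (i₁:ℕ))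
          (by omega) (by omega) (by omega) m₁ hm₁ m₂ hm₂ hmm hp3 hr3 hq3 hs3
      · have : (i₁ : ℕ) = (i₂ : ℕ) :=
          interval_unique (x := q) (by omega) (by omega) hq1 (le_of_lt hq2)
        exact hii (Fin.ext this)

end Assemble
end NCL

namespace NCL

section Assemble2
variable {n k : ℕ} {σ : Equiv.Perm (Fin k)} {b : Fin k → ℕ}
  {T : ∀ i : Fin k, PP (Finset.range (b i))}

lemma pos_le_pos {m m' : ℕ} (h : m ≤ m') : pos k b m ≤ pos k b m' := by
  rcases Nat.eq_or_lt_of_le h with h | h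
  · subst h; exact le_rfl
  · exact le_of_lt (pos_lt_pos h)

lemma last_mem_Lb (hk1 : 1 ≤ k) (hkn : k ≤ n) (hb : ∑ i, b i = n - k) :
    n - 1 ∈ Lb σ b := by
  have := mem_Lb_posn (σ := σ) (b := b) ⟨k - 1, by omega⟩
  rwa [pos_last hk1 hkn hb] at this

lemma length_Lb : (Lb σ b).length = k := by simp [Lb]

lemma shifted_eq_filter (hk1 : 1 ≤ k) (hkn : k ≤ n) (hb : ∑ i, b i = n - k) (i : Fin k) :
    (T i).1.image (List.map (· + Off k b (i : ℕ))) =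
      (asmS σ b T).filter
        (fun l => ∀ x ∈ l, Off k b (i : ℕ) ≤ x ∧ x < pos k b (i : ℕ)) := by
  ext l
  rw [Finset.mem_filter]
  constructor
  · rintro hl
    obtain ⟨m, hm, rfl⟩ := Finset.mem_image.1 hl
    refine ⟨mem_asmS.2 (Or.inr ⟨i, m, hm, rfl⟩), ?_⟩
    intro x hx
    obtain ⟨h1, h2, -⟩ := shifted_elem hm hx
    exact ⟨h1, h2⟩
  · rintro ⟨hl, hpred⟩
    rcases mem_asmS.1 hl with rfl | ⟨i', m', hm', rfl⟩
    · obtain ⟨-, h2⟩ := hpred _ (last_mem_Lb hk1 hkn hb)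
      have h3 : pos k b (i : ℕ) ≤ pos k b (k - 1) := pos_le_pos (by omega)
      rw [pos_last hk1 hkn hb] at h3
      omega
    · obtain ⟨hne', -, -⟩ := (T i').2.1 m' hm'
      obtain ⟨y, hy⟩ := List.exists_mem_of_ne_nil m' hne'
      have hxl : y + Off k b (i' : ℕ) ∈ List.map (· + Off k b (i' : ℕ)) m' :=
        List.mem_map.2 ⟨y, hy, rfl⟩
      obtain ⟨h1, h2, -⟩ := shifted_elem hm' hxl
      obtain ⟨h1', h2'⟩ := hpred _ hxl
      have : (i' : ℕ) = (i : ℕ) :=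
        interval_unique h1 (le_of_lt h2) h1' (le_of_lt h2')
      have : i' = i := Fin.ext this
      subst this
      exact Finset.mem_image.2 ⟨m', hm', rfl⟩

/-- `b` is determined by the block positions. -/
lemma b_eq_of_pos_eq {b₂ : Fin k → ℕ}
    (h : ∀ i : Fin k, pos k b (i : ℕ) = pos k b₂ (i : ℕ)) : b = b₂ := by
  have hOff : ∀ m, m ≤ k → Off k b m = Off k b₂ m := by
    intro m
    induction m with
    | zero => intro _; rw [Off_zero, Off_zero]
    | succ m ih =>
      intro hm
      have h1 := h ⟨m, by omega⟩
      simp only [] at h1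
      rw [Off_succ, Off_succ, h1]
  funext i
  have h1 := h i
  have h2 := hOff i (le_of_lt i.isLt)
  rw [pos, pos, B_coe, B_coe] at h1
  omega

end Assemble2

/-- The sigma type on the right-hand side of the recurrence. -/
def Target (n : ℕ) : Type :=
  Σ k : (Finset.Icc 1 n), Equiv.Perm (Fin k) ×
    Σ bb : (Finset.Nat.antidiagonalTuple (k : ℕ) (n - k)),
      ∀ i : Fin (k : ℕ), PP (Finset.range (bb.1 i))

lemma Target.hk1 {n : ℕ} (k : (Finset.Icc 1 n : Finset ℕ)) : 1 ≤ (k : ℕ) :=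
  (Finset.mem_Icc.1 k.2).1

lemma Target.hkn {n : ℕ} (k : (Finset.Icc 1 n : Finset ℕ)) : (k : ℕ) ≤ n :=
  (Finset.mem_Icc.1 k.2).2

lemma Target.hb {n : ℕ} {k : (Finset.Icc 1 n : Finset ℕ)}
    (bb : (Finset.Nat.antidiagonalTuple (k : ℕ) (n - k) : Finset _)) :
    ∑ i, bb.1 i = n - (k : ℕ) :=
  Finset.Nat.mem_antidiagonalTuple.1 bb.2

/-- The assembly map. -/
def asm (n : ℕ) : Target n → PP (Finset.range n) :=
  fun D => ⟨asmS (D.2.1) (D.2.2.1.1) (D.2.2.2),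
    asm_good (Target.hk1 D.1) (Target.hkn D.1) (Target.hb D.2.2.1)⟩

theorem asm_injective (n : ℕ) : Function.Injective (asm n) := by
  rintro ⟨k₁, σ₁, bb₁, T₁⟩ ⟨k₂, σ₂, bb₂, T₂⟩ h
  have hS : asmS σ₁ bb₁.1 T₁ = asmS σ₂ bb₂.1 T₂ := congrArg Subtype.val h
  have hg₁ := asm_good (σ := σ₁) (T := T₁) (Target.hk1 k₁) (Target.hkn k₁) (Target.hb bb₁)
  have hn1 : 1 ≤ n := le_trans (Target.hk1 k₁) (Target.hkn k₁)
  -- the lists containing n-1 agree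
  have hLb : Lb σ₁ bb₁.1 = Lb σ₂ bb₂.1 := by
    obtain ⟨l, -, hu⟩ := hg₁.2.1 (n - 1) (Finset.mem_range.2 (by omega))
    have e₁ := hu (Lb σ₁ bb₁.1) ⟨Finset.mem_insert_self _ _,
      last_mem_Lb (Target.hk1 k₁) (Target.hkn k₁) (Target.hb bb₁)⟩
    have e₂ := hu (Lb σ₂ bb₂.1) ⟨by rw [hS]; exact Finset.mem_insert_self _ _,
      last_mem_Lb (Target.hk1 k₂) (Target.hkn k₂) (Target.hb bb₂)⟩
    rw [e₁, e₂]
  -- k's agree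
  have hk : k₁ = k₂ := by
    have : ((k₁ : ℕ) : ℕ) = (k₂ : ℕ) := by
      have h1 := length_Lb (σ := σ₁) (b := bb₁.1)
      have h2 := length_Lb (σ := σ₂) (b := bb₂.1)
      rw [← h1, ← h2, hLb]
    exact Subtype.ext this
  subst hk
  -- positions agree
  have hpos : ∀ i : Fin (k₁ : ℕ), pos (k₁ : ℕ) bb₁.1 (i : ℕ) = pos (k₁ : ℕ) bb₂.1 (i : ℕ) := by
    have hcard : (Lb σ₁ bb₁.1).toFinset.card = (k₁ : ℕ) := by
      rw [List.toFinset_card_of_nodup Lb_nodup, length_Lb]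
    have hu1 : (fun i : Fin (k₁ : ℕ) => pos (k₁ : ℕ) bb₁.1 (i : ℕ)) =
        ((Lb σ₁ bb₁.1).toFinset.orderEmbOfFin hcard : Fin (k₁ : ℕ) → ℕ) :=
      Finset.orderEmbOfFin_unique hcard
        (fun i => List.mem_toFinset.2 (mem_Lb_posn i))
        (fun i j hij => pos_lt_pos hij)
    have hu2 : (fun i : Fin (k₁ : ℕ) => pos (k₁ : ℕ) bb₂.1 (i : ℕ)) =
        ((Lb σ₁ bb₁.1).toFinset.orderEmbOfFin hcard : Fin (k₁ : ℕ) → ℕ) :=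
      Finset.orderEmbOfFin_unique hcard
        (fun i => List.mem_toFinset.2 (hLb ▸ mem_Lb_posn i))
        (fun i j hij => pos_lt_pos hij)
    intro i
    rw [congrFun hu1 i, congrFun hu2 i]
  have hbb : bb₁ = bb₂ := Subtype.ext (b_eq_of_pos_eq hpos)
  subst hbb
  -- permutations agree
  have hσ : σ₁ = σ₂ := by
    rw [Lb, Lb, List.ofFn_inj] at hLb
    refine Equiv.ext fun j => ?_
    have := congrFun hLb j
    exact Fin.ext (pos_inj this)
  subst hσ
  -- gap partitions agree
  have hT : T₁ = T₂ := by
    funext i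
    refine Subtype.ext ?_
    have h1 := shifted_eq_filter (σ := σ₁) (T := T₁)
      (Target.hk1 k₁) (Target.hkn k₁) (Target.hb bb₁) i
    have h2 := shifted_eq_filter (σ := σ₁) (T := T₂)
      (Target.hk1 k₁) (Target.hkn k₁) (Target.hb bb₁) i
    rw [hS] at h1
    have himg : (T₁ i).1.image (List.map (· + Off (k₁ : ℕ) bb₁.1 (i : ℕ))) =
        (T₂ i).1.image (List.map (· + Off (k₁ : ℕ) bb₁.1 (i : ℕ))) := by
      rw [h1, h2]
    exact Finset.image_injective
      (List.map_injective_iff.2 (fun x y hxy => by omega)) himg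
  subst hT
  rfl

end NCL

namespace NCL

theorem asm_surjective (n : ℕ) (hn : 1 ≤ n) : Function.Surjective (asm n) := by
  classical
  rintro ⟨S, hS⟩
  obtain ⟨L, ⟨hLS, hLm⟩, hLu⟩ := hS.2.1 (n - 1) (Finset.mem_range.2 (by omega))
  obtain ⟨hLne, hLnd, hLsub⟩ := hS.1 L hLS
  have hcard : L.toFinset.card = L.length := List.toFinset_card_of_nodup hLnd
  have hk1 : 1 ≤ L.length := List.length_pos_iff.2 hLne
  set e : Fin L.length → ℕ := fun i => L.toFinset.orderEmbOfFin hcard i with he_def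
  have he_mono : StrictMono e := (L.toFinset.orderEmbOfFin hcard).strictMono
  have he_mem : ∀ i, e i ∈ L.toFinset := fun i => Finset.orderEmbOfFin_mem _ hcard i
  have key : ∀ z : {y // y ∈ L.toFinset},
      L.toFinset.orderEmbOfFin hcard ((L.toFinset.orderIsoOfFin hcard).symm z) = z := by
    intro z
    rw [← Finset.coe_orderIsoOfFin_apply, OrderIso.apply_symm_apply]
  have he_surj : ∀ x ∈ L.toFinset, ∃ i, e i = x := by
    intro x hx
    exact ⟨(L.toFinset.orderIsoOfFin hcard).symm ⟨x, hx⟩, key ⟨x, hx⟩⟩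
  set b : Fin L.length → ℕ := fun i =>
    if (i : ℕ) = 0 then e i
    else e i - e ⟨(i : ℕ) - 1, Nat.lt_of_le_of_lt (Nat.pred_le _) i.isLt⟩ - 1 with hb_def
  -- positions of the distinguished block
  have hpos_eq : ∀ m (hm : m < L.length), pos L.length b m = e ⟨m, hm⟩ := by
    intro m
    induction m with
    | zero =>
      intro hm
      have hB : B L.length b 0 = b ⟨0, hm⟩ := by rw [B, dif_pos hm]
      have hbv : b ⟨0, hm⟩ = e ⟨0, hm⟩ := by simp [hb_def]
      rw [pos, Off_zero, hB, hbv]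
      omega
    | succ m ih =>
      intro hm
      have h1 := ih (by omega)
      have hlt : e ⟨m, by omega⟩ < e ⟨m + 1, hm⟩ := he_mono (by
        rw [Fin.mk_lt_mk]; omega)
      have hB : B L.length b (m + 1) = b ⟨m + 1, hm⟩ := by rw [B, dif_pos hm]
      have hbv : b ⟨m + 1, hm⟩ = e ⟨m + 1, hm⟩ - e ⟨m, by omega⟩ - 1 := by
        simp [hb_def]
      rw [pos, Off_succ, h1, hB, hbv]
      omega
  have hposFin : ∀ i : Fin L.length, pos L.length b (i : ℕ) = e i := by
    intro i
    rw [hpos_eq _ i.isLt]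
  -- the top position is n - 1
  have hmax : ∀ x ∈ L.toFinset, x ≤ n - 1 := by
    intro x hx
    have := hLsub x (List.mem_toFinset.1 hx)
    rw [Finset.mem_range] at this; omega
  have he_top : e ⟨L.length - 1, by omega⟩ = n - 1 := by
    obtain ⟨t, ht⟩ := he_surj (n - 1) (List.mem_toFinset.2 hLm)
    have h1 : ∀ i, e i ≤ e t := fun i => ht ▸ hmax _ (he_mem i)
    have h2 : (⟨L.length - 1, by omega⟩ : Fin L.length) ≤ t :=
      he_mono.le_iff_le.1 (h1 _)
    have h3 : t ≤ (⟨L.length - 1, by omega⟩ : Fin L.length) := by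
      rw [Fin.le_def]
      have := t.isLt; simp; omega
    rw [← ht]
    congr 1
    exact le_antisymm h2 h3
  have hOffk : Off L.length b L.length = n := by
    have h0 : Off L.length b L.length = Off L.length b (L.length - 1 + 1) := by
      congr 1; omega
    rw [h0, Off_succ, hpos_eq (L.length - 1) (by omega), he_top]
    omega
  have hOs := Off_self (k := L.length) (b := b)
  have hkn : L.length ≤ n := by omega
  have hb : ∑ i, b i = n - L.length := by omega
  -- elements not in the block lie in gaps
  have hgap_elem : ∀ x, x < n → x ∉ L.toFinset →
      ∃ m, ∃ _ : m < L.length, Off L.length b m ≤ x ∧ x < pos L.length b m := by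
    intro x hx hxA
    obtain ⟨m, hm, h1, h2⟩ := cover hkn hb hx
    refine ⟨m, hm, h1, lt_of_le_of_ne h2 ?_⟩
    intro hhe
    exact hxA (hhe ▸ (hpos_eq m hm ▸ he_mem ⟨m, hm⟩))
  have hposL : ∀ m (hm : m < L.length), pos L.length b m ∈ L := by
    intro m hm
    rw [hpos_eq m hm]
    exact List.mem_toFinset.1 (he_mem _)
  -- every other list lies entirely in one gap
  have hgap_list : ∀ l ∈ S, l ≠ L → ∃ i : Fin L.length,
      ∀ x ∈ l, Off L.length b (i : ℕ) ≤ x ∧ x < pos L.length b (i : ℕ) := by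
    intro l hl hnel
    obtain ⟨hlne, hlnd, hlsub⟩ := hS.1 l hl
    have hnotA : ∀ x ∈ l, x ∉ L.toFinset := by
      intro x hx hxA
      exact Good.disj hS hl hLS hnel hx (List.mem_toFinset.1 hxA)
    have hloc : ∀ x ∈ l, ∃ m, ∃ _ : m < L.length,
        Off L.length b m ≤ x ∧ x < pos L.length b m := by
      intro x hx
      exact hgap_elem x (Finset.mem_range.1 (hlsub x hx)) (hnotA x hx)
    -- two elements in different gaps would cross the block
    have aux : ∀ x ∈ l, ∀ y ∈ l, ∀ mx my, mx < L.length → my < L.length →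
        Off L.length b mx ≤ x → x < pos L.length b mx →
        Off L.length b my ≤ y → y < pos L.length b my → mx < my → False := by
      intro x hx y hy mx my hmx hmy hx1 hx2 hy1 hy2 hmm
      have hq : pos L.length b mx < y := by
        have : Off L.length b (mx + 1) ≤ Off L.length b my := Off_mono hmm
        rw [Off_succ] at this
        omega
      have hs : y < n - 1 := by
        have h1 : pos L.length b my = e ⟨my, hmy⟩ := hpos_eq my hmy
        have h2 : e ⟨my, hmy⟩ ≤ n - 1 := hmax _ (he_mem _)
        omega
      exact hS.2.2 x (pos L.length b mx) y (n - 1) hx2 hq hs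
        l hl L hLS hnel hx hy (hposL mx hmx) hLm
    obtain ⟨x₀, hx₀⟩ := List.exists_mem_of_ne_nil l hlne
    obtain ⟨m₀, hm₀, h01, h02⟩ := hloc x₀ hx₀
    refine ⟨⟨m₀, hm₀⟩, ?_⟩
    intro x hx
    obtain ⟨m, hm, h1, h2⟩ := hloc x hx
    rcases Nat.lt_trichotomy m m₀ with h | h | h
    · exact absurd h (fun h => aux x hx x₀ hx₀ m m₀ hm hm₀ h1 h2 h01 h02 h)
    · subst h; exact ⟨h1, h2⟩
    · exact absurd h (fun h => aux x₀ hx₀ x hx m₀ m hm₀ hm h01 h02 h1 h2 h)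
  -- gap finsets
  set Gi : Fin L.length → Finset (List ℕ) := fun i =>
    S.filter (fun l => ∀ x ∈ l, Off L.length b (i : ℕ) ≤ x ∧ x < pos L.length b (i : ℕ))
    with hGi_def
  have hGpos : ∀ i : Fin L.length,
      pos L.length b (i : ℕ) = Off L.length b (i : ℕ) + b i := by
    intro i; rw [pos, B_coe]
  have hLnotG : ∀ i : Fin L.length, L ∉ Gi i := by
    intro i hLG
    rw [hGi_def, Finset.mem_filter] at hLG
    obtain ⟨-, h2⟩ := hLG
    obtain ⟨-, h4⟩ := h2 (n - 1) hLm
    have h5 : pos L.length b (i : ℕ) ≤ pos L.length b (L.length - 1) :=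
      pos_le_pos (by have := i.isLt; omega)
    rw [hpos_eq (L.length - 1) (by omega), he_top] at h5
    omega
  -- gap members are not in the block
  have hgap_not_block : ∀ (i : Fin L.length) x, Off L.length b (i : ℕ) ≤ x →
      x < pos L.length b (i : ℕ) → x ∉ L.toFinset := by
    intro i x h1 h2 hxA
    obtain ⟨t, ht⟩ := he_surj x hxA
    have hpt := hposFin t
    exact pos_not_in_gap (k := L.length) (b := b) (i := (i : ℕ)) (j := (t : ℕ))
      (by omega) (by omega)
  -- the gap partitions are Good
  have hGiT : ∀ i : Fin L.length, Good (Finset.range (b i))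
      ((Gi i).image (List.map (· - Off L.length b (i : ℕ)))) := by
    intro i
    refine ⟨?_, ?_, ?_⟩
    · intro l hl
      obtain ⟨m, hm, rfl⟩ := Finset.mem_image.1 hl
      rw [hGi_def, Finset.mem_filter] at hm
      obtain ⟨hmS, hmpred⟩ := hm
      obtain ⟨hmne, hmnd, hmsub⟩ := hS.1 _ hmS
      refine ⟨by simpa using hmne, ?_, ?_⟩
      · refine hmnd.map_on ?_
        intro x hx y hy hxy
        have := hmpred x hx; have := hmpred y hy; omega
      · intro x hx
        rw [List.mem_map] at hx
        obtain ⟨y, hy, rfl⟩ := hx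
        obtain ⟨hy1, hy2⟩ := hmpred y hy
        rw [Finset.mem_range]
        have := hGpos i
        omega
    · intro y hy
      rw [Finset.mem_range] at hy
      set x := y + Off L.length b (i : ℕ) with hx_def
      have hx1 : Off L.length b (i : ℕ) ≤ x := by omega
      have hx2 : x < pos L.length b (i : ℕ) := by have := hGpos i; omega
      have hxn : x < n := by
        have h5 : pos L.length b (i : ℕ) ≤ pos L.length b (L.length - 1) :=
          pos_le_pos (by have := i.isLt; omega)
        rw [hpos_eq (L.length - 1) (by omega), he_top] at h5
        omega
      obtain ⟨l, ⟨hlS, hxl⟩, hlu⟩ := hS.2.1 x (Finset.mem_range.2 hxn)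
      have hlneL : l ≠ L := by
        intro hh; subst hh
        exact hgap_not_block i x hx1 hx2 (List.mem_toFinset.2 hxl)
      obtain ⟨i', hi'⟩ := hgap_list l hlS hlneL
      have hii : i' = i := by
        obtain ⟨h1, h2⟩ := hi' x hxl
        exact Fin.ext (interval_unique h1 (le_of_lt h2) hx1 (le_of_lt hx2))
      subst hii
      have hlG : l ∈ Gi i' := by
        rw [hGi_def, Finset.mem_filter]; exact ⟨hlS, hi'⟩
      refine ⟨l.map (· - Off L.length b (i' : ℕ)),
        ⟨Finset.mem_image.2 ⟨l, hlG, rfl⟩, List.mem_map.2 ⟨x, hxl, by omega⟩⟩, ?_⟩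
      rintro l' ⟨hl', hyl'⟩
      obtain ⟨m, hmG, rfl⟩ := Finset.mem_image.1 hl'
      rw [List.mem_map] at hyl'
      obtain ⟨z, hz, hzy⟩ := hyl'
      have hmpred := (Finset.mem_filter.1 (hGi_def ▸ hmG)).2
      have hmS := (Finset.mem_filter.1 (hGi_def ▸ hmG)).1
      obtain ⟨hz1, hz2⟩ := hmpred z hz
      have hzx : z = x := by omega
      subst hzx
      rw [hlu m ⟨hmS, hz⟩]
    · intro p q r s hpq hqr hrs l₁ hl₁ l₂ hl₂ hnel hp hr hq hs
      obtain ⟨m₁, hm₁G, rfl⟩ := Finset.mem_image.1 hl₁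
      obtain ⟨m₂, hm₂G, rfl⟩ := Finset.mem_image.1 hl₂
      have hm₁pred := (Finset.mem_filter.1 (hGi_def ▸ hm₁G)).2
      have hm₂pred := (Finset.mem_filter.1 (hGi_def ▸ hm₂G)).2
      have hm₁S := (Finset.mem_filter.1 (hGi_def ▸ hm₁G)).1
      have hm₂S := (Finset.mem_filter.1 (hGi_def ▸ hm₂G)).1
      obtain ⟨p', hp', rfl⟩ := List.mem_map.1 hp
      obtain ⟨r', hr', rfl⟩ := List.mem_map.1 hr
      obtain ⟨q', hq', rfl⟩ := List.mem_map.1 hq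
      obtain ⟨s', hs', rfl⟩ := List.mem_map.1 hs
      obtain ⟨hpa, -⟩ := hm₁pred p' hp'
      obtain ⟨hra, -⟩ := hm₁pred r' hr'
      obtain ⟨hqa, -⟩ := hm₂pred q' hq'
      obtain ⟨hsa, -⟩ := hm₂pred s' hs'
      have hmm : m₁ ≠ m₂ := fun h => hnel (by rw [h])
      exact hS.2.2 p' q' r' s' (by omega) (by omega) (by omega)
        m₁ hm₁S m₂ hm₂S hmm hp' hr' hq' hs'
  set T : ∀ i : Fin L.length, PP (Finset.range (b i)) := fun i =>
    ⟨(Gi i).image (List.map (· - Off L.length b (i : ℕ))), hGiT i⟩ with hT_def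
  -- the permutation
  have hgetinj : Function.Injective L.get := List.nodup_iff_injective_get.1 hLnd
  set f : Fin L.length → Fin L.length := fun j =>
    (L.toFinset.orderIsoOfFin hcard).symm ⟨L.get j, List.mem_toFinset.2 (L.get_mem _)⟩
    with hf_def
  have hfinj : Function.Injective f := by
    intro j j' hjj
    rw [hf_def] at hjj
    have := (L.toFinset.orderIsoOfFin hcard).symm.injective hjj
    exact hgetinj (Subtype.ext_iff.1 this)
  set σ : Equiv.Perm (Fin L.length) :=
    Equiv.ofBijective f (Finite.injective_iff_bijective.1 hfinj) with hσ_def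
  have hef : ∀ j, e (f j) = L.get j :=
    fun j => key ⟨L.get j, List.mem_toFinset.2 (L.get_mem _)⟩
  -- the assembled partition equals S
  have hLb : Lb σ b = L := by
    rw [Lb]
    have : (fun j => pos L.length b ((σ j : Fin L.length) : ℕ)) = L.get := by
      funext j
      rw [hposFin (σ j)]
      have : σ j = f j := rfl
      rw [this, hef]
    rw [this, List.ofFn_get]
  have himg : ∀ i : Fin L.length,
      (T i).1.image (List.map (· + Off L.length b (i : ℕ))) = Gi i := by
    intro i
    rw [hT_def]
    simp only [Finset.image_image]
    have : ∀ l ∈ Gi i,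
        (List.map (· + Off L.length b (i : ℕ)) ∘ List.map (· - Off L.length b (i : ℕ))) l
          = l := by
      intro l hl
      have hpred := (Finset.mem_filter.1 (hGi_def ▸ hl)).2
      simp only [Function.comp_apply, List.map_map]
      have : ∀ x ∈ l, ((· + Off L.length b (i : ℕ)) ∘ (· - Off L.length b (i : ℕ))) x
          = id x := by
        intro x hx
        obtain ⟨h1, -⟩ := hpred x hx
        simp only [Function.comp_apply, id]
        omega
      rw [List.map_congr_left this, List.map_id]
    calc (Gi i).image _ = (Gi i).image id := Finset.image_congr this
      _ = Gi i := Finset.image_id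
  have hasm : asmS σ b T = S := by
    ext l
    constructor
    · intro hl
      rcases mem_asmS.1 hl with rfl | ⟨i, m, hm, rfl⟩
      · rw [hLb]; exact hLS
      · have : List.map (· + Off L.length b (i : ℕ)) m ∈ Gi i := by
          rw [← himg i]
          exact Finset.mem_image.2 ⟨m, hm, rfl⟩
        exact (Finset.mem_filter.1 (hGi_def ▸ this)).1
    · intro hl
      by_cases hh : l = L
      · have hmem : Lb σ b ∈ asmS σ b T := Finset.mem_insert_self _ _
        rw [hLb] at hmem
        rw [hh]
        exact hmem
      · obtain ⟨i, hi⟩ := hgap_list l hl hh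
        have hlG : l ∈ Gi i := by
          rw [hGi_def, Finset.mem_filter]; exact ⟨hl, hi⟩
        rw [← himg i] at hlG
        obtain ⟨m, hm, rfl⟩ := Finset.mem_image.1 hlG
        exact mem_asmS.2 (Or.inr ⟨i, m, hm, rfl⟩)
  exact ⟨⟨⟨L.length, Finset.mem_Icc.2 ⟨hk1, hkn⟩⟩, σ,
    ⟨b, Finset.Nat.mem_antidiagonalTuple.2 hb⟩, T⟩, Subtype.ext hasm⟩

end NCL

namespace NCL

/-- `PP A` is a finite type. -/
instance PP.finite (A : Finset ℕ) : Finite (PP A) := by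
  classical
  set LS : Set (List ℕ) := {l : List ℕ | l.Nodup ∧ ∀ x ∈ l, x ∈ A} with hLS
  have hLSfin : LS.Finite := by
    have h1 : {l : List ({x // x ∈ A}) | l.length ≤ A.card}.Finite :=
      List.finite_length_le _ _
    have h2 : ((List.map (Subtype.val : {x // x ∈ A} → ℕ)) ''
        {l : List ({x // x ∈ A}) | l.length ≤ A.card}).Finite := h1.image _
    refine h2.subset ?_
    rintro l ⟨hnd, hmem⟩
    refine ⟨l.pmap (fun x h => (⟨x, h⟩ : {x // x ∈ A})) hmem, ?_, ?_⟩
    · have hnd' : (l.pmap (fun x h => (⟨x, h⟩ : {x // x ∈ A})) hmem).Nodup := by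
        refine List.Nodup.pmap ?_ hnd
        intro a ha b hb hab
        exact congrArg Subtype.val hab
      have := hnd'.length_le_card
      simpa [List.length_pmap, Fintype.card_coe] using this
    · simp [List.map_pmap]
  have hsub : ∀ S : PP A, (↑S.1 : Set (List ℕ)) ⊆ LS := by
    rintro ⟨S, hG⟩ l hl
    obtain ⟨-, h2, h3⟩ := hG.1 l hl
    exact ⟨h2, h3⟩
  have hfin2 : {b : Set (List ℕ) | b ⊆ LS}.Finite := hLSfin.finite_subsets
  haveI := hfin2.to_subtype
  refine Finite.of_injective
    (fun S : PP A => (⟨(↑S.1 : Set (List ℕ)), hsub S⟩ : {b : Set (List ℕ) | b ⊆ LS})) ?_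
  intro S₁ S₂ h
  have : (↑S₁.1 : Set (List ℕ)) = ↑S₂.1 := congrArg Subtype.val h
  exact Subtype.ext (Finset.coe_injective this)

lemma card_PP_empty : Nat.card (PP (Finset.range 0)) = 1 := by
  rw [Nat.card_eq_one_iff_unique]
  constructor
  · constructor
    rintro ⟨S₁, hS₁⟩ ⟨S₂, hS₂⟩
    have he : ∀ (S : Finset (List ℕ)), Good (Finset.range 0) S → S = ∅ := by
      intro S hG
      rw [Finset.eq_empty_iff_forall_notMem]
      intro l hl
      obtain ⟨h1, -, h3⟩ := hG.1 l hl
      obtain ⟨x, hx⟩ := List.exists_mem_of_ne_nil l h1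
      simpa using h3 x hx
    exact Subtype.ext ((he S₁ hS₁).trans (he S₂ hS₂).symm)
  · refine ⟨⟨∅, ?_, ?_, ?_⟩⟩
    · simp
    · intro x hx; simp at hx
    · intro a b c d _ _ _ l₁ hl₁; simp at hl₁

lemma card_SetOfNCLists_zero : Nat.card (SetOfNCLists 0) = 1 := by
  rw [Nat.card_eq_one_iff_unique]
  constructor
  · constructor
    rintro ⟨S₁, hS₁⟩ ⟨S₂, hS₂⟩
    have he : ∀ (S : Finset (List (Fin 0))),
        (∀ l ∈ S, l ≠ [] ∧ l.Nodup) → S = ∅ := by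
      intro S hG
      rw [Finset.eq_empty_iff_forall_notMem]
      intro l hl
      obtain ⟨x, hx⟩ := List.exists_mem_of_ne_nil l (hG l hl).1
      exact x.elim0
    exact Subtype.ext ((he S₁ hS₁.1).trans (he S₂ hS₂.1).symm)
  · refine ⟨⟨∅, ?_, ?_, ?_⟩⟩
    · simp
    · intro x; exact x.elim0
    · rintro ⟨a, -⟩; exact a.elim0

/-- Transfer between the `Fin n` world and the `ℕ` world. -/
lemma u_eq_card_PP (n : ℕ) : u n = Nat.card (PP (Finset.range n)) := by
  rcases Nat.eq_zero_or_pos n with rfl | hn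
  · rw [u, card_SetOfNCLists_zero, card_PP_empty]
  classical
  rw [u]
  refine Nat.card_eq_of_bijective
    (fun S => (⟨S.1.image (List.map (Fin.val : Fin n → ℕ)), ?_⟩ : PP (Finset.range n)))
    ⟨?_, ?_⟩
  · -- goodness of the image
    obtain ⟨S, h1, h2, h3⟩ := S
    refine ⟨?_, ?_, ?_⟩
    · intro l hl
      obtain ⟨m, hm, rfl⟩ := Finset.mem_image.1 hl
      obtain ⟨hne, hnd⟩ := h1 m hm
      exact ⟨by simpa using hne, hnd.map (fun x y h => Fin.ext h), by
        intro x hx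
        obtain ⟨y, -, rfl⟩ := List.mem_map.1 hx
        exact Finset.mem_range.2 y.isLt⟩
    · intro x hx
      rw [Finset.mem_range] at hx
      obtain ⟨l, ⟨hlS, hxl⟩, hlu⟩ := h2 ⟨x, hx⟩
      refine ⟨l.map Fin.val, ⟨Finset.mem_image.2 ⟨l, hlS, rfl⟩,
        List.mem_map.2 ⟨⟨x, hx⟩, hxl, rfl⟩⟩, ?_⟩
      rintro l' ⟨hl', hxl'⟩
      obtain ⟨m, hmS, rfl⟩ := Finset.mem_image.1 hl'
      obtain ⟨z, hz, hzx⟩ := List.mem_map.1 hxl'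
      have : z = ⟨x, hx⟩ := Fin.ext hzx
      subst this
      rw [hlu m ⟨hmS, hz⟩]
    · intro p q r s hpq hqr hrs l₁ hl₁ l₂ hl₂ hne hp hr hq hs
      obtain ⟨m₁, hm₁, rfl⟩ := Finset.mem_image.1 hl₁
      obtain ⟨m₂, hm₂, rfl⟩ := Finset.mem_image.1 hl₂
      obtain ⟨p', hp', rfl⟩ := List.mem_map.1 hp
      obtain ⟨r', hr', rfl⟩ := List.mem_map.1 hr
      obtain ⟨q', hq', rfl⟩ := List.mem_map.1 hq
      obtain ⟨s', hs', rfl⟩ := List.mem_map.1 hs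
      have hmm : m₁ ≠ m₂ := fun h => hne (by rw [h])
      exact h3 ⟨p', q', r', s', hpq, hqr, hrs, m₁, hm₁, m₂, hm₂, hmm,
        hp', hr', hq', hs'⟩
  · -- injective
    intro S₁ S₂ h
    have himg := congrArg Subtype.val h
    simp only at himg
    exact Subtype.ext (Finset.image_injective
      (List.map_injective_iff.2 Fin.val_injective) himg)
  · -- surjective
    rintro ⟨T, hT⟩
    have toFin : ℕ → Fin n := fun x => ⟨x % n, Nat.mod_lt x hn⟩
    refine ⟨⟨T.image (List.map (fun x => (⟨x % n, Nat.mod_lt x hn⟩ : Fin n))),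
      ?_, ?_, ?_⟩, ?_⟩
    · intro l hl
      obtain ⟨m, hm, rfl⟩ := Finset.mem_image.1 hl
      obtain ⟨hne, hnd, hsub⟩ := hT.1 m hm
      refine ⟨by simpa using hne, hnd.map_on ?_⟩
      intro x hx y hy hxy
      have hx' := Finset.mem_range.1 (hsub x hx)
      have hy' := Finset.mem_range.1 (hsub y hy)
      have := congrArg Fin.val hxy
      simp only [Nat.mod_eq_of_lt hx', Nat.mod_eq_of_lt hy'] at this
      exact this
    · rintro ⟨x, hx⟩
      obtain ⟨l, ⟨hlT, hxl⟩, hlu⟩ := hT.2.1 x (Finset.mem_range.2 hx)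
      refine ⟨l.map (fun z => (⟨z % n, Nat.mod_lt z hn⟩ : Fin n)),
        ⟨Finset.mem_image.2 ⟨l, hlT, rfl⟩,
         List.mem_map.2 ⟨x, hxl, Fin.ext (by simp [Nat.mod_eq_of_lt hx])⟩⟩, ?_⟩
      rintro l' ⟨hl', hxl'⟩
      obtain ⟨m, hmT, rfl⟩ := Finset.mem_image.1 hl'
      obtain ⟨z, hz, hzx⟩ := List.mem_map.1 hxl'
      have hz' := Finset.mem_range.1 ((hT.1 m hmT).2.2 z hz)
      have : z = x := by
        have := congrArg Fin.val hzx
        simpa [Nat.mod_eq_of_lt hz'] using this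
      subst this
      rw [hlu m ⟨hmT, hz⟩]
    · rintro ⟨p, q, r, s, hpq, hqr, hrs, l₁, hl₁, l₂, hl₂, hne, hp, hr, hq, hs⟩
      obtain ⟨m₁, hm₁, rfl⟩ := Finset.mem_image.1 hl₁
      obtain ⟨m₂, hm₂, rfl⟩ := Finset.mem_image.1 hl₂
      obtain ⟨p', hp', hpv⟩ := List.mem_map.1 hp
      obtain ⟨r', hr', hrv⟩ := List.mem_map.1 hr
      obtain ⟨q', hq', hqv⟩ := List.mem_map.1 hq
      obtain ⟨s', hs', hsv⟩ := List.mem_map.1 hs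
      have hpb := Finset.mem_range.1 ((hT.1 m₁ hm₁).2.2 p' hp')
      have hrb := Finset.mem_range.1 ((hT.1 m₁ hm₁).2.2 r' hr')
      have hqb := Finset.mem_range.1 ((hT.1 m₂ hm₂).2.2 q' hq')
      have hsb := Finset.mem_range.1 ((hT.1 m₂ hm₂).2.2 s' hs')
      have hpv' : p' % n = (p : ℕ) := congrArg Fin.val hpv
      have hrv' : r' % n = (r : ℕ) := congrArg Fin.val hrv
      have hqv' : q' % n = (q : ℕ) := congrArg Fin.val hqv
      have hsv' : s' % n = (s : ℕ) := congrArg Fin.val hsv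
      rw [Nat.mod_eq_of_lt hpb] at hpv'
      rw [Nat.mod_eq_of_lt hrb] at hrv'
      rw [Nat.mod_eq_of_lt hqb] at hqv'
      rw [Nat.mod_eq_of_lt hsb] at hsv'
      have hmm : m₁ ≠ m₂ := fun h => hne (by rw [h])
      have hpq' : p' < q' := by rw [Fin.lt_def] at hpq; omega
      have hqr' : q' < r' := by rw [Fin.lt_def] at hqr; omega
      have hrs' : r' < s' := by rw [Fin.lt_def] at hrs; omega
      exact hT.2.2 p' q' r' s' hpq' hqr' hrs' m₁ hm₁ m₂ hm₂ hmm hp' hr' hq' hs'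
    · -- roundtrip
      refine Subtype.ext ?_
      simp only
      rw [Finset.image_image]
      have : ∀ l ∈ T,
          ((List.map (Fin.val : Fin n → ℕ)) ∘
            (List.map (fun x => (⟨x % n, Nat.mod_lt x hn⟩ : Fin n)))) l = l := by
        intro l hl
        have hsub := (hT.1 l hl).2.2
        simp only [Function.comp_apply, List.map_map]
        have : ∀ x ∈ l, ((Fin.val : Fin n → ℕ) ∘
            (fun x => (⟨x % n, Nat.mod_lt x hn⟩ : Fin n))) x = id x := by
          intro x hx
          have := Finset.mem_range.1 (hsub x hx)
          simp [Nat.mod_eq_of_lt this]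
        rw [List.map_congr_left this, List.map_id]
      calc T.image _ = T.image id := Finset.image_congr this
        _ = T := Finset.image_id

/-- Cardinality of a sigma type over a fintype with finite fibers. -/
lemma card_sigma' {ι : Type*} [Fintype ι] (F : ι → Type*) [∀ i, Finite (F i)] :
    Nat.card (Σ i, F i) = ∑ i, Nat.card (F i) := by
  letI : ∀ i, Fintype (F i) := fun i => Fintype.ofFinite _
  simp only [Nat.card_eq_fintype_card, Fintype.card_sigma]

end NCL

/-- Recurrence: `u n = ∑_{k=1}^{n} k! ∑ u(b₁)⋯u(b_k)`, the inner sum over all weak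
compositions `(b₁,…,b_k)` of `n - k` into `k` nonnegative parts. -/
theorem u_recurrence (n : ℕ) (hn : 1 ≤ n) :
    u n = ∑ k ∈ Finset.Icc 1 n, k.factorial *
      ∑ b ∈ Finset.Nat.antidiagonalTuple k (n - k), ∏ i, u (b i) := by
  classical
  rw [NCL.u_eq_card_PP]
  rw [← Nat.card_eq_of_bijective (NCL.asm n)
    ⟨NCL.asm_injective n, NCL.asm_surjective n hn⟩]
  have h1 : Nat.card (NCL.Target n) =
      ∑ k : {x // x ∈ Finset.Icc 1 n}, Nat.card (Equiv.Perm (Fin (k : ℕ)) ×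
        Σ bb : {x // x ∈ Finset.Nat.antidiagonalTuple (k : ℕ) (n - (k : ℕ))},
          ∀ i : Fin (k : ℕ), NCL.PP (Finset.range (bb.1 i))) :=
    NCL.card_sigma' _
  rw [h1]
  rw [Finset.sum_coe_sort (Finset.Icc 1 n) (fun m : ℕ =>
    Nat.card (Equiv.Perm (Fin m) ×
      Σ bb : {x // x ∈ Finset.Nat.antidiagonalTuple m (n - m)},
        ∀ i : Fin m, NCL.PP (Finset.range (bb.1 i))))]
  refine Finset.sum_congr rfl ?_
  intro k hk
  rw [Nat.card_prod]
  congr 1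
  · rw [Nat.card_eq_fintype_card, Fintype.card_perm, Fintype.card_fin]
  · rw [NCL.card_sigma' _]
    have h2 : ∀ bb : {x // x ∈ Finset.Nat.antidiagonalTuple k (n - k)},
        Nat.card (∀ i : Fin k, NCL.PP (Finset.range (bb.1 i))) =
          ∏ i, Nat.card (NCL.PP (Finset.range (bb.1 i))) :=
      fun bb => Nat.card_pi
    rw [Finset.sum_congr rfl (fun bb _ => h2 bb)]
    rw [Finset.sum_coe_sort (Finset.Nat.antidiagonalTuple k (n - k))
      (fun b : Fin k → ℕ => ∏ i, Nat.card (NCL.PP (Finset.range (b i))))]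
    refine Finset.sum_congr rfl ?_
    intro b hb
    refine Finset.prod_congr rfl ?_
    intro i hi
    rw [← NCL.u_eq_card_PP]
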